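/- Let K be an algebraically closed field of characteristic 0 and A = K[x_{ij}] the coordinate ring of the (2,4,2) nilradical m of gl(8,K). Let B1 ⊆ A be the K-subalgebra generated by M1, M2, N1, N2, L11, L12, L21, L22, D. If F ∈ A is an N-invariant polynomial (invariant under conjugation by all unitriangular g) such that M1·F ∈ B1, then F ∈ B1. -/

import Mathlib

/- Statement 0: the identity L12·L21 − L11·L22 = M1·N1·D in the coordinate ring of the
(2,4,2) nilradical of gl(8,K).  Variables are indexed 0-based: x_{ij} (1-based) is
`X (i-1, j-1)`.  The ambient polynomial ring contains all pairs, but only nilradical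
variables occur in the polynomials and in the generic matrix `Xgen`. -/

noncomputable section

open MvPolynomial

variable (K : Type*) [Field K] [CharZero K]

/-- nilradical positions of the (2,4,2) parabolic (0-based). -/
def NilPos242 (i j : Fin 8) : Prop :=
  (i.val < 2 ∧ 2 ≤ j.val) ∨ (2 ≤ i.val ∧ i.val < 6 ∧ 6 ≤ j.val)

instance (i j : Fin 8) : Decidable (NilPos242 i j) := by
  unfold NilPos242; infer_instance

abbrev A8 := MvPolynomial (Fin 8 × Fin 8) K

def pM1 : A8 K := X (1,2)
def pM2 : A8 K := X (0,2) * X (1,3) - X (0,3) * X (1,2)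
def pN1 : A8 K := X (5,6)
def pN2 : A8 K := X (4,6) * X (5,7) - X (4,7) * X (5,6)
def pL11 : A8 K :=
  X (1,2) * X (2,6) + X (1,3) * X (3,6) + X (1,4) * X (4,6) + X (1,5) * X (5,6)
def pL12 : A8 K :=
  (X (0,2) * X (1,3) - X (0,3) * X (1,2)) * X (3,6) +
  (X (0,2) * X (1,4) - X (0,4) * X (1,2)) * X (4,6) +
  (X (0,2) * X (1,5) - X (0,5) * X (1,2)) * X (5,6)
def pL21 : A8 K :=
  X (1,2) * (X (2,6) * X (5,7) - X (2,7) * X (5,6)) +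
  X (1,3) * (X (3,6) * X (5,7) - X (3,7) * X (5,6)) +
  X (1,4) * (X (4,6) * X (5,7) - X (4,7) * X (5,6))
def pL22 : A8 K :=
  (X (0,2) * X (1,3) - X (0,3) * X (1,2)) * (X (3,6) * X (5,7) - X (3,7) * X (5,6)) +
  (X (0,2) * X (1,4) - X (0,4) * X (1,2)) * (X (4,6) * X (5,7) - X (4,7) * X (5,6))

/-- the generic nilradical matrix: `x_{ij}` at nilradical positions, `0` elsewhere. -/
def Xgen : Matrix (Fin 8) (Fin 8) (A8 K) :=
  fun i j => if NilPos242 i j then X (i, j) else 0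


/-- `D` = minor of `X²` on rows {1,2}, columns {7,8} (1-based). -/
def pD : A8 K := (Xgen K * Xgen K) 0 6 * (Xgen K * Xgen K) 1 7 -
  (Xgen K * Xgen K) 0 7 * (Xgen K * Xgen K) 1 6

/-- membership in the (2,4,2) nilradical. -/
def InNil242 (Y : Matrix (Fin 8) (Fin 8) K) : Prop :=
  ∀ i j : Fin 8, ¬ NilPos242 i j → Y i j = 0

/-- upper unitriangular matrices. -/
def IsUnitriangular (g : Matrix (Fin 8) (Fin 8) K) : Prop :=
  (∀ i, g i i = 1) ∧ ∀ i j : Fin 8, j < i → g i j = 0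

/-- evaluation of a polynomial of `A8 K` at a matrix. -/
def evalAt (Y : Matrix (Fin 8) (Fin 8) K) : A8 K →+* K :=
  (MvPolynomial.eval fun p : Fin 8 × Fin 8 => Y p.1 p.2)

/-- a polynomial is N-invariant if its value is unchanged under conjugation of the
argument by any unitriangular matrix. -/
def IsNInvariant (f : A8 K) : Prop :=
  ∀ g Y : Matrix (Fin 8) (Fin 8) K, IsUnitriangular K g → InNil242 K Y →
    evalAt K (g⁻¹ * Y * g) f = evalAt K Y f

/-- the subalgebra B1 generated by M1, M2, N1, N2, L11, L12, L21, L22 and D. -/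
def B1 : Subalgebra K (A8 K) :=
  Algebra.adjoin K
    {pM1 K, pM2 K, pN1 K, pN2 K, pL11 K, pL12 K, pL21 K, pL22 K, pD K}

/- ===== auxiliary machinery for the proof of M1_saturation ===== -/

set_option linter.unusedSectionVars false
set_option maxHeartbeats 1000000
set_option synthInstance.maxHeartbeats 400000

section Aux

lemma finvals8 : ((0:Fin 8):ℕ) = 0 ∧ ((1:Fin 8):ℕ) = 1 ∧ ((2:Fin 8):ℕ) = 2 ∧ ((3:Fin 8):ℕ) = 3 ∧
    ((4:Fin 8):ℕ) = 4 ∧ ((5:Fin 8):ℕ) = 5 ∧ ((6:Fin 8):ℕ) = 6 ∧ ((7:Fin 8):ℕ) = 7 := by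
  decide

/-- entries of `Xgen²` on rows 0,1 columns 6,7 -/
lemma Xsq_entry (i : Fin 8) (hi : i = 0 ∨ i = 1) (j : Fin 8) (hj : j = 6 ∨ j = 7) :
    (Xgen K * Xgen K) i j =
      X (i,2) * X (2,j) + X (i,3) * X (3,j) + X (i,4) * X (4,j) + X (i,5) * X (5,j) := by
  rcases hi with rfl | rfl <;> rcases hj with rfl | rfl <;>
  simp [Xgen, Matrix.mul_apply, Fin.sum_univ_eight, NilPos242, finvals8.1, finvals8.2.1,
    finvals8.2.2.1, finvals8.2.2.2.1, finvals8.2.2.2.2.1, finvals8.2.2.2.2.2.1,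
    finvals8.2.2.2.2.2.2.1, finvals8.2.2.2.2.2.2.2]

/-- Statement 0 : the fundamental identity L12·L21 − L11·L22 = M1·N1·D. -/
lemma rel_identity :
    pL12 K * pL21 K - pL11 K * pL22 K = pM1 K * pN1 K * pD K := by
  rw [pD, Xsq_entry K 0 (Or.inl rfl) 6 (Or.inl rfl), Xsq_entry K 0 (Or.inl rfl) 7 (Or.inr rfl),
    Xsq_entry K 1 (Or.inr rfl) 6 (Or.inl rfl), Xsq_entry K 1 (Or.inr rfl) 7 (Or.inr rfl),
    pL12, pL21, pL11, pL22, pM1, pN1]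
  ring

end Aux

section Aux2

/-- the abstract polynomial ring in 7 variables: 0=M2, 1=N1, 2=N2, 3=L11, 4=L12, 5=L21, 6=D. -/
abbrev R7 := MvPolynomial (Fin 7) K

abbrev T7 := FractionRing (R7 K)

def zz (i : Fin 7) : T7 K := algebraMap (R7 K) (T7 K) (X i)

lemma zz_ne_zero (i : Fin 7) : zz K i ≠ 0 := by
  simp only [zz, ne_eq, IsFractionRing.to_map_eq_zero_iff]
  exact MvPolynomial.X_ne_zero i

/-- the section values -/
def vT : Fin 8 × Fin 8 → T7 K := fun p =>
  if p = (0,2) then zz K 4 / zz K 3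
  else if p = (1,3) then zz K 0 * zz K 3 / zz K 4
  else if p = (1,4) then zz K 3
  else if p = (0,5) then -(zz K 6 / zz K 5)
  else if p = (3,7) then (zz K 2 * zz K 3 - zz K 5) * zz K 4 / (zz K 0 * zz K 1 * zz K 3)
  else if p = (4,6) then 1
  else if p = (5,6) then zz K 1
  else if p = (5,7) then zz K 2
  else 0

lemma vT02 : vT K (0,2) = zz K 4 / zz K 3 := rfl
lemma vT03 : vT K (0,3) = 0 := rfl
lemma vT04 : vT K (0,4) = 0 := rfl
lemma vT05 : vT K (0,5) = -(zz K 6 / zz K 5) := rfl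
lemma vT12 : vT K (1,2) = 0 := rfl
lemma vT13 : vT K (1,3) = zz K 0 * zz K 3 / zz K 4 := rfl
lemma vT14 : vT K (1,4) = zz K 3 := rfl
lemma vT15 : vT K (1,5) = 0 := rfl
lemma vT26 : vT K (2,6) = 0 := rfl
lemma vT27 : vT K (2,7) = 0 := rfl
lemma vT36 : vT K (3,6) = 0 := rfl
lemma vT37 : vT K (3,7) = (zz K 2 * zz K 3 - zz K 5) * zz K 4 / (zz K 0 * zz K 1 * zz K 3) := rfl
lemma vT46 : vT K (4,6) = 1 := rfl
lemma vT47 : vT K (4,7) = 0 := rfl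
lemma vT56 : vT K (5,6) = zz K 1 := rfl
lemma vT57 : vT K (5,7) = zz K 2 := rfl

def rho : A8 K →+* T7 K :=
  MvPolynomial.eval₂Hom ((algebraMap (R7 K) (T7 K)).comp MvPolynomial.C) (vT K)

lemma rho_X (p : Fin 8 × Fin 8) : rho K (X p) = vT K p :=
  MvPolynomial.eval₂Hom_X' _ _ _

lemma rho_M1 : rho K (pM1 K) = 0 := by rw [pM1, rho_X, vT12]

lemma rho_M2 : rho K (pM2 K) = zz K 0 := by
  have h3 := zz_ne_zero K 3; have h4 := zz_ne_zero K 4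
  rw [pM2, map_sub, map_mul, map_mul, rho_X, rho_X, rho_X, rho_X, vT02, vT13, vT03, vT12]
  field_simp
  ring

lemma rho_N1 : rho K (pN1 K) = zz K 1 := by rw [pN1, rho_X, vT56]

lemma rho_N2 : rho K (pN2 K) = zz K 2 := by
  rw [pN2, map_sub, map_mul, map_mul, rho_X, rho_X, rho_X, rho_X, vT46, vT57, vT47, vT56]
  ring

lemma rho_L11 : rho K (pL11 K) = zz K 3 := by
  rw [pL11, map_add, map_add, map_add, map_mul, map_mul, map_mul, map_mul,
    rho_X, rho_X, rho_X, rho_X, rho_X, rho_X, rho_X, rho_X,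
    vT12, vT26, vT13, vT36, vT14, vT46, vT15, vT56]
  ring

lemma rho_L12 : rho K (pL12 K) = zz K 4 := by
  have h3 := zz_ne_zero K 3
  rw [pL12]
  simp only [map_add, map_sub, map_mul, rho_X, vT02, vT13, vT03, vT12, vT36, vT14, vT04,
    vT46, vT15, vT05, vT56]
  field_simp
  ring

lemma rho_L21 : rho K (pL21 K) = zz K 5 := by
  have h0 := zz_ne_zero K 0; have h1 := zz_ne_zero K 1
  have h3 := zz_ne_zero K 3; have h4 := zz_ne_zero K 4
  rw [pL21]
  simp only [map_add, map_sub, map_mul, rho_X, vT12, vT26, vT57, vT27, vT56, vT13, vT36,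
    vT37, vT14, vT46, vT47]
  field_simp
  ring

lemma rho_L22 : rho K (pL22 K) = zz K 4 * zz K 5 / zz K 3 := by
  have h0 := zz_ne_zero K 0; have h1 := zz_ne_zero K 1
  have h3 := zz_ne_zero K 3; have h4 := zz_ne_zero K 4
  rw [pL22]
  simp only [map_add, map_sub, map_mul, rho_X, vT02, vT13, vT03, vT12, vT36, vT57, vT37,
    vT56, vT14, vT04, vT46, vT47]
  field_simp
  ring

lemma rhoXsq06 : rho K ((Xgen K * Xgen K) 0 6) = -(zz K 6 * zz K 1 / zz K 5) := by
  rw [Xsq_entry K 0 (Or.inl rfl) 6 (Or.inl rfl)]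
  simp only [map_add, map_mul, rho_X, vT02, vT26, vT03, vT36, vT04, vT46, vT05, vT56]
  ring

lemma rhoXsq07 : rho K ((Xgen K * Xgen K) 0 7) = -(zz K 6 * zz K 2 / zz K 5) := by
  rw [Xsq_entry K 0 (Or.inl rfl) 7 (Or.inr rfl)]
  simp only [map_add, map_mul, rho_X, vT02, vT27, vT03, vT37, vT04, vT47, vT05, vT57]
  ring

lemma rhoXsq16 : rho K ((Xgen K * Xgen K) 1 6) = zz K 3 := by
  rw [Xsq_entry K 1 (Or.inr rfl) 6 (Or.inl rfl)]
  simp only [map_add, map_mul, rho_X, vT12, vT26, vT13, vT36, vT14, vT46, vT15, vT56]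
  ring

lemma rhoXsq17 : rho K ((Xgen K * Xgen K) 1 7) = (zz K 2 * zz K 3 - zz K 5) / zz K 1 := by
  have h0 := zz_ne_zero K 0; have h1 := zz_ne_zero K 1
  have h3 := zz_ne_zero K 3; have h4 := zz_ne_zero K 4
  rw [Xsq_entry K 1 (Or.inr rfl) 7 (Or.inr rfl)]
  simp only [map_add, map_mul, rho_X, vT12, vT27, vT13, vT37, vT14, vT47, vT15, vT57]
  field_simp
  ring

lemma rho_D : rho K (pD K) = zz K 6 := by
  have h1 := zz_ne_zero K 1; have h5 := zz_ne_zero K 5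
  rw [pD, map_sub, map_mul, map_mul, rhoXsq06, rhoXsq17, rhoXsq07, rhoXsq16]
  field_simp
  ring

end Aux2

section Aux3

open Polynomial

/-- the relation polynomial  l11·W − l12·l21  (W stands for L22). -/
def qpoly : Polynomial (R7 K) :=
  Polynomial.C (X 3) * Polynomial.X - Polynomial.C (X 4 * X 5)

def tval : T7 K := zz K 4 * zz K 5 / zz K 3

def lamHom : Polynomial (R7 K) →+* T7 K :=
  Polynomial.eval₂RingHom (algebraMap (R7 K) (T7 K)) (tval K)

lemma lam_C (a : R7 K) : lamHom K (Polynomial.C a) = algebraMap (R7 K) (T7 K) a :=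
  Polynomial.eval₂_C _ _

lemma lam_X : lamHom K Polynomial.X = tval K := Polynomial.eval₂_X _ _

lemma lam_q : lamHom K (qpoly K) = 0 := by
  have h3 := zz_ne_zero K 3
  rw [qpoly, map_sub, map_mul, lam_C, lam_C, lam_X, map_mul]
  show zz K 3 * tval K - zz K 4 * zz K 5 = 0
  rw [tval]
  field_simp
  ring

/-- substitution killing the variable 3 -/
def phi : R7 K →ₐ[K] R7 K :=
  MvPolynomial.aeval (fun i => if i = 3 then 0 else X i)

lemma X3_dvd_sub (r : R7 K) : (X (3 : Fin 7) : R7 K) ∣ r - phi K r := by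
  induction r using MvPolynomial.induction_on with
  | C a => simp [phi]
  | add p q hp hq =>
    have h := dvd_add hp hq
    have : p - phi K p + (q - phi K q) = p + q - phi K (p + q) := by
      rw [map_add]; ring
    rwa [this] at h
  | mul_X p n hp =>
    rw [map_mul, phi, MvPolynomial.aeval_X]
    by_cases hn : n = 3
    · subst hn
      rw [if_pos rfl, mul_zero, sub_zero]
      exact dvd_mul_left _ _
    · rw [if_neg hn]
      have : p * X n - (MvPolynomial.aeval fun i => if i = 3 then 0 else X i) p * X n
          = (p - phi K p) * X n := by rw [phi]; ring
      rw [this]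
      exact hp.mul_right _

lemma X3_dvd_of_phi_zero (r : R7 K) (h : phi K r = 0) : (X (3 : Fin 7) : R7 K) ∣ r := by
  have := X3_dvd_sub K r
  rwa [h, sub_zero] at this

lemma C_X3_ne : (Polynomial.C (X (3 : Fin 7)) : Polynomial (R7 K)) ≠ 0 := by
  rw [ne_eq, Polynomial.C_eq_zero]
  exact MvPolynomial.X_ne_zero _

lemma cancel_C_X3 (P Q2 : Polynomial (R7 K))
    (h : Polynomial.C (X (3:Fin 7)) * P = qpoly K * Q2) : ∃ Q, P = qpoly K * Q := by
  have hphi3 : phi K (X (3:Fin 7)) = 0 := by simp [phi]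
  have hmap := congrArg (Polynomial.map (phi K).toRingHom) h
  rw [Polynomial.map_mul, Polynomial.map_mul, Polynomial.map_C] at hmap
  have hq : (qpoly K).map (phi K).toRingHom = -Polynomial.C (X 4 * X 5) := by
    rw [qpoly, Polynomial.map_sub, Polynomial.map_mul, Polynomial.map_C, Polynomial.map_C,
      Polynomial.map_X]
    have h4 : (phi K).toRingHom (X 4 * X 5) = X 4 * X 5 := by simp [phi]
    have h3 : (phi K).toRingHom (X (3:Fin 7)) = 0 := hphi3
    rw [h4, h3, Polynomial.C_0, zero_mul, zero_sub]
  rw [hq] at hmap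
  have h3' : (phi K).toRingHom (X (3:Fin 7)) = 0 := hphi3
  rw [h3', Polynomial.C_0, zero_mul] at hmap
  have hQ20 : Q2.map (phi K).toRingHom = 0 := by
    rcases mul_eq_zero.mp hmap.symm with h' | h'
    · exfalso
      rw [neg_eq_zero, Polynomial.C_eq_zero] at h'
      exact mul_ne_zero (MvPolynomial.X_ne_zero _) (MvPolynomial.X_ne_zero _) h'
    · exact h'
  have hdvd : Polynomial.C (X (3:Fin 7)) ∣ Q2 := by
    rw [Polynomial.C_dvd_iff_dvd_coeff]
    intro n
    apply X3_dvd_of_phi_zero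
    have := congrArg (fun p => Polynomial.coeff p n) hQ20
    simpa [Polynomial.coeff_map] using this
  obtain ⟨Q, rfl⟩ := hdvd
  refine ⟨Q, mul_left_cancel₀ (C_X3_ne K) ?_⟩
  rw [h]; ring

lemma kernel_lemma (n : ℕ) : ∀ P : Polynomial (R7 K), P.natDegree ≤ n →
    lamHom K P = 0 → ∃ Q, P = qpoly K * Q := by
  induction n with
  | zero =>
    intro P hdeg h
    obtain ⟨a, rfl⟩ : ∃ a, Polynomial.C a = P :=
      Polynomial.natDegree_eq_zero.mp (Nat.le_zero.mp hdeg)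
    rw [lam_C] at h
    rw [IsFractionRing.to_map_eq_zero_iff] at h
    exact ⟨0, by rw [h, mul_zero, Polynomial.C_0]⟩
  | succ n ih =>
    intro P hdeg h
    by_cases hle : P.natDegree ≤ n
    · exact ih P hle h
    · have hkey : Polynomial.C (X (3:Fin 7)) * P
          = qpoly K * P.divX + (Polynomial.C (X 4 * X 5) * P.divX
            + Polynomial.C (X 3 * P.coeff 0)) := by
        conv_lhs => rw [← P.divX_mul_X_add]
        rw [qpoly]
        simp only [Polynomial.C_mul]
        ring
      set P' := Polynomial.C ((X 4 * X 5 : R7 K)) * P.divX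
          + Polynomial.C ((X 3 : R7 K) * P.coeff 0) with hP'
      have hdiv : P.divX.natDegree ≤ n := by
        rw [Polynomial.natDegree_divX_eq_natDegree_tsub_one]
        omega
      have hP'deg : P'.natDegree ≤ n := by
        refine le_trans (Polynomial.natDegree_add_le _ _) ?_
        rw [Polynomial.natDegree_C]
        simp only [max_le_iff]
        exact ⟨le_trans (Polynomial.natDegree_C_mul_le _ _) hdiv, Nat.zero_le _⟩
      have hP'eval : lamHom K P' = 0 := by
        have hk := congrArg (lamHom K) hkey
        rw [map_mul, h, mul_zero, map_add, map_mul, lam_q, zero_mul, zero_add] at hk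
        exact hk.symm
      obtain ⟨Q', hQ'⟩ := ih P' hP'deg hP'eval
      have hfin : Polynomial.C (X (3:Fin 7)) * P = qpoly K * (P.divX + Q') := by
        rw [hkey, hQ']; ring
      exact cancel_C_X3 K P _ hfin

end Aux3

section Aux4

lemma memM1 : pM1 K ∈ B1 K := Algebra.subset_adjoin (by simp)
lemma memM2 : pM2 K ∈ B1 K := Algebra.subset_adjoin (by simp)
lemma memN1 : pN1 K ∈ B1 K := Algebra.subset_adjoin (by simp)
lemma memN2 : pN2 K ∈ B1 K := Algebra.subset_adjoin (by simp)
lemma memL11 : pL11 K ∈ B1 K := Algebra.subset_adjoin (by simp)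
lemma memL12 : pL12 K ∈ B1 K := Algebra.subset_adjoin (by simp)
lemma memL21 : pL21 K ∈ B1 K := Algebra.subset_adjoin (by simp)
lemma memL22 : pL22 K ∈ B1 K := Algebra.subset_adjoin (by simp)
lemma memD : pD K ∈ B1 K := Algebra.subset_adjoin (by simp)

def gvec : Fin 7 → A8 K := ![pM2 K, pN1 K, pN2 K, pL11 K, pL12 K, pL21 K, pD K]

lemma gvec0 : gvec K 0 = pM2 K := rfl
lemma gvec1 : gvec K 1 = pN1 K := rfl
lemma gvec2 : gvec K 2 = pN2 K := rfl
lemma gvec3 : gvec K 3 = pL11 K := rfl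
lemma gvec4 : gvec K 4 = pL12 K := rfl
lemma gvec5 : gvec K 5 = pL21 K := rfl
lemma gvec6 : gvec K 6 = pD K := rfl

def bvec : Fin 7 → (B1 K) :=
  ![⟨pM2 K, memM2 K⟩, ⟨pN1 K, memN1 K⟩, ⟨pN2 K, memN2 K⟩, ⟨pL11 K, memL11 K⟩,
    ⟨pL12 K, memL12 K⟩, ⟨pL21 K, memL21 K⟩, ⟨pD K, memD K⟩]

lemma bvec_coe (i : Fin 7) : ((bvec K i : B1 K) : A8 K) = gvec K i := by
  fin_cases i <;> rfl

def PiB : Polynomial (R7 K) →+* (B1 K) :=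
  Polynomial.eval₂RingHom (MvPolynomial.eval₂Hom (algebraMap K (B1 K)) (bvec K))
    ⟨pL22 K, memL22 K⟩

def PiA : Polynomial (R7 K) →+* A8 K :=
  ((B1 K).val : B1 K →ₐ[K] A8 K).toRingHom.comp (PiB K)

lemma PiA_mem (P : Polynomial (R7 K)) : PiA K P ∈ B1 K := (PiB K P).2

lemma PiA_C_X (i : Fin 7) : PiA K (Polynomial.C (X i)) = gvec K i := by
  show ((PiB K (Polynomial.C (X i)) : B1 K) : A8 K) = gvec K i
  rw [PiB, Polynomial.coe_eval₂RingHom, Polynomial.eval₂_C, MvPolynomial.eval₂Hom_X']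
  exact bvec_coe K i

lemma PiA_C_C (r : K) : PiA K (Polynomial.C (MvPolynomial.C r)) = algebraMap K (A8 K) r := by
  show ((PiB K (Polynomial.C (MvPolynomial.C r)) : B1 K) : A8 K) = _
  rw [PiB, Polynomial.coe_eval₂RingHom, Polynomial.eval₂_C, MvPolynomial.eval₂Hom_C]
  rfl

lemma PiA_X : PiA K (Polynomial.X) = pL22 K := by
  show ((PiB K Polynomial.X : B1 K) : A8 K) = _
  rw [PiB, Polynomial.coe_eval₂RingHom, Polynomial.eval₂_X]

lemma decomp (b : A8 K) (hb : b ∈ B1 K) :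
    ∃ (P : Polynomial (R7 K)) (c : A8 K), c ∈ B1 K ∧ b = PiA K P + pM1 K * c := by
  induction hb using Algebra.adjoin_induction with
  | mem x hx =>
    simp only [Set.mem_insert_iff, Set.mem_singleton_iff] at hx
    rcases hx with rfl | rfl | rfl | rfl | rfl | rfl | rfl | rfl | rfl
    · exact ⟨0, 1, one_mem _, by simp⟩
    · exact ⟨Polynomial.C (X 0), 0, zero_mem _, by rw [PiA_C_X, gvec0]; simp⟩
    · exact ⟨Polynomial.C (X 1), 0, zero_mem _, by rw [PiA_C_X, gvec1]; simp⟩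
    · exact ⟨Polynomial.C (X 2), 0, zero_mem _, by rw [PiA_C_X, gvec2]; simp⟩
    · exact ⟨Polynomial.C (X 3), 0, zero_mem _, by rw [PiA_C_X, gvec3]; simp⟩
    · exact ⟨Polynomial.C (X 4), 0, zero_mem _, by rw [PiA_C_X, gvec4]; simp⟩
    · exact ⟨Polynomial.C (X 5), 0, zero_mem _, by rw [PiA_C_X, gvec5]; simp⟩
    · exact ⟨Polynomial.X, 0, zero_mem _, by rw [PiA_X]; simp⟩
    · exact ⟨Polynomial.C (X 6), 0, zero_mem _, by rw [PiA_C_X, gvec6]; simp⟩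
  | algebraMap r => exact ⟨Polynomial.C (MvPolynomial.C r), 0, zero_mem _,
      by rw [PiA_C_C]; simp⟩
  | add x y hx hy ihx ihy =>
    obtain ⟨P, c, hc, rfl⟩ := ihx
    obtain ⟨P', c', hc', rfl⟩ := ihy
    exact ⟨P + P', c + c', add_mem hc hc', by rw [map_add]; ring⟩
  | mul x y hx hy ihx ihy =>
    obtain ⟨P, c, hc, rfl⟩ := ihx
    obtain ⟨P', c', hc', rfl⟩ := ihy
    refine ⟨P * P', PiA K P * c' + c * PiA K P' + pM1 K * (c * c'), ?_, by rw [map_mul]; ring⟩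
    exact add_mem (add_mem (mul_mem (PiA_mem K P) hc') (mul_mem hc (PiA_mem K P')))
      (mul_mem (memM1 K) (mul_mem hc hc'))

lemma rho_gvec (i : Fin 7) : rho K (gvec K i) = zz K i := by
  fin_cases i
  · exact rho_M2 K
  · exact rho_N1 K
  · exact rho_N2 K
  · exact rho_L11 K
  · exact rho_L12 K
  · exact rho_L21 K
  · exact rho_D K

lemma rho_PiA (P : Polynomial (R7 K)) : rho K (PiA K P) = lamHom K P := by
  set f : (B1 K) →+* T7 K := (rho K).comp ((B1 K).val.toRingHom) with hf
  have h1 : rho K (PiA K P) = Polynomial.eval₂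
      (f.comp (MvPolynomial.eval₂Hom (algebraMap K (B1 K)) (bvec K)))
      (f ⟨pL22 K, memL22 K⟩) P := by
    rw [PiA, RingHom.comp_apply, PiB, Polynomial.coe_eval₂RingHom, ← RingHom.comp_apply, ← hf]
    exact Polynomial.hom_eval₂ P _ f _
  have h2 : f.comp (MvPolynomial.eval₂Hom (algebraMap K (B1 K)) (bvec K))
      = algebraMap (R7 K) (T7 K) := by
    apply MvPolynomial.ringHom_ext
    · intro r
      rw [RingHom.comp_apply, MvPolynomial.eval₂Hom_C, hf, RingHom.comp_apply]
      show rho K (((algebraMap K (B1 K) r : B1 K) : A8 K)) = _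
      have : ((algebraMap K (B1 K) r : B1 K) : A8 K) = algebraMap K (A8 K) r := rfl
      rw [this, MvPolynomial.algebraMap_eq, rho, MvPolynomial.eval₂Hom_C]
      rfl
    · intro i
      rw [RingHom.comp_apply, MvPolynomial.eval₂Hom_X', hf, RingHom.comp_apply]
      show rho K ((bvec K i : A8 K)) = _
      rw [bvec_coe, rho_gvec]
      rfl
  have h3 : f ⟨pL22 K, memL22 K⟩ = tval K := by
    show rho K (pL22 K) = tval K
    rw [rho_L22]
    rfl
  rw [h1, h2, h3]
  rfl

end Aux4

/-- if F is N-invariant and M1·F ∈ B1, then F ∈ B1. -/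
theorem M1_saturation (F : A8 K) (hF : IsNInvariant K F)
    (hMF : pM1 K * F ∈ B1 K) : F ∈ B1 K := by
  obtain ⟨P, c, hc, hb⟩ := decomp K (pM1 K * F) hMF
  have hev : lamHom K P = 0 := by
    have h := congrArg (rho K) hb
    rw [map_mul, rho_M1, zero_mul, map_add, map_mul, rho_M1, zero_mul, add_zero, rho_PiA] at h
    exact h.symm
  obtain ⟨Q, hQ⟩ := kernel_lemma K P.natDegree P le_rfl hev
  have hPiq : PiA K (qpoly K) = -(pM1 K * pN1 K * pD K) := by
    rw [qpoly, map_sub, map_mul, PiA_X, Polynomial.C_mul, map_mul, PiA_C_X, PiA_C_X, PiA_C_X,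
      gvec3, gvec4, gvec5, ← rel_identity K]
    ring
  have hM1ne : pM1 K ≠ 0 := by rw [pM1]; exact MvPolynomial.X_ne_zero _
  have heq : pM1 K * F = pM1 K * (c - pN1 K * pD K * PiA K Q) := by
    rw [hb, hQ, map_mul, hPiq]
    ring
  have hF : F = c - pN1 K * pD K * PiA K Q := mul_left_cancel₀ hM1ne heq
  rw [hF]
  exact sub_mem hc (mul_mem (mul_mem (memN1 K) (memD K)) (PiA_mem K Q))


end
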